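/- The weighted adjacency matrix A of L_N(q) is diagonalizable over ℝ. -/

import Mathlib

open scoped Classical
open Module

theorem stmt_10 (q N : ℕ) (F : Type*) [Field F] [Fintype F] (hF : Fintype.card F = q)
    (V : Type*) [AddCommGroup V] [Module F V] [FiniteDimensional F V]
    (hV : finrank F V = N) [Fintype (Submodule F V)]
    (A : Matrix (Submodule F V) (Submodule F V) ℝ)
    (hA : ∀ y z : Submodule F V, A y z =
      if z ≤ y ∧ finrank F y = finrank F z + 1 then 1
      else if y ≤ z ∧ finrank F z = finrank F y + 1 then (q : ℝ) ^ finrank F y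
      else 0) :
    ∃ P D : Matrix (Submodule F V) (Submodule F V) ℝ,
      IsUnit P ∧ D.IsDiag ∧ A = P * D * P⁻¹ := by
  classical
  have hq0 : (0:ℝ) < q := by
    have : 0 < Fintype.card F := Fintype.card_pos
    rw [hF] at this
    exact_mod_cast this
  set d : Submodule F V → ℝ := fun y =>
    (q:ℝ) ^ ((((finrank F y : ℝ))^2 - (finrank F y : ℝ))/4) with hd
  have hdpos : ∀ y, 0 < d y := fun y => Real.rpow_pos_of_pos hq0 _
  have key : ∀ y z : Submodule F V, finrank F y = finrank F z + 1 →
      d y * d y = (q:ℝ) ^ finrank F z * (d z * d z) := by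
    intro y z h
    rw [hd]
    simp only [h]
    rw [← Real.rpow_natCast (q:ℝ) (finrank F z), ← Real.rpow_add hq0,
      ← Real.rpow_add hq0, ← Real.rpow_add hq0]
    congr 1
    push_cast
    ring
  set E : Matrix (Submodule F V) (Submodule F V) ℝ := Matrix.diagonal d with hE
  set E' : Matrix (Submodule F V) (Submodule F V) ℝ :=
    Matrix.diagonal (fun y => (d y)⁻¹) with hE'
  have hEE' : E * E' = 1 := by
    rw [hE, hE', Matrix.diagonal_mul_diagonal]
    have h1 : (fun y => d y * (d y)⁻¹) = fun _ : Submodule F V => (1:ℝ) :=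
      funext fun y => mul_inv_cancel₀ (hdpos y).ne'
    rw [h1, Matrix.diagonal_one]
  have hE'E : E' * E = 1 := by
    rw [hE, hE', Matrix.diagonal_mul_diagonal]
    have h1 : (fun y => (d y)⁻¹ * d y) = fun _ : Submodule F V => (1:ℝ) :=
      funext fun y => inv_mul_cancel₀ (hdpos y).ne'
    rw [h1, Matrix.diagonal_one]
  set B := E * A * E' with hB
  have hBsym : B.IsHermitian := by
    rw [Matrix.IsHermitian, Matrix.conjTranspose_eq_transpose_of_trivial]
    ext y z
    rw [Matrix.transpose_apply, hB, hE, hE']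
    simp only [Matrix.diagonal_mul, Matrix.mul_diagonal]
    rw [hA y z, hA z y]
    by_cases hc1 : z ≤ y ∧ finrank F y = finrank F z + 1
    · have hc2 : ¬ (y ≤ z ∧ finrank F z = finrank F y + 1) := by omega
      simp only [if_pos hc1, if_neg hc2]
      have hy := (hdpos y).ne'
      have hz := (hdpos z).ne'
      field_simp
      linear_combination (-1 : ℝ) * key y z hc1.2
    · by_cases hc2 : y ≤ z ∧ finrank F z = finrank F y + 1
      · simp only [if_neg hc1, if_pos hc2]
        have hy := (hdpos y).ne'
        have hz := (hdpos z).ne'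
        field_simp
        linear_combination key z y hc2.2
      · simp only [if_neg hc1, if_neg hc2]
        ring
  have hAB : A = E' * B * E := by
    rw [hB]
    rw [← mul_assoc, ← mul_assoc, hE'E, one_mul, mul_assoc, hE'E, mul_one]
  have hspec := hBsym.spectral_theorem
  set U : Matrix (Submodule F V) (Submodule F V) ℝ := (hBsym.eigenvectorUnitary : Matrix (Submodule F V) (Submodule F V) ℝ) with hU
  set D : Matrix (Submodule F V) (Submodule F V) ℝ :=
    Matrix.diagonal (RCLike.ofReal ∘ hBsym.eigenvalues) with hD
  have hUU : U * star U = 1 := (Matrix.mem_unitaryGroup_iff).mp hBsym.eigenvectorUnitary.2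
  have hUU' : star U * U = 1 := (Matrix.mem_unitaryGroup_iff').mp hBsym.eigenvectorUnitary.2
  have h1 : (E' * U) * (star U * E) = 1 := by
    rw [mul_assoc E' U, ← mul_assoc U (star U) E, hUU, one_mul, hE'E]
  have h2 : (star U * E) * (E' * U) = 1 := by
    rw [mul_assoc (star U) E, ← mul_assoc E E' U, hEE', one_mul, hUU']
  refine ⟨E' * U, D, ⟨⟨E' * U, star U * E, h1, h2⟩, rfl⟩, Matrix.isDiag_diagonal _, ?_⟩
  rw [Matrix.inv_eq_right_inv h1, hAB, hspec, Unitary.conjStarAlgAut_apply, ← hU]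
  simp only [mul_assoc]
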